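/- Let Σ and Σ' be polytope decompositions of E = ℚ^d. Define Σ ⊓ Σ' to be the set of all polytopes σ ∩ σ' for σ ∈ Σ, σ' ∈ Σ' with σ ∩ σ' ≠ ∅. Then Σ ⊓ Σ' is a polytope decomposition of E and is a common subdivision of Σ and Σ' (every cell of Σ ⊓ Σ' is contained in a cell of Σ and in a cell of Σ'). -/

import Mathlib

open Set Pointwise

variable {d : ℕ}

/-- A (compact convex, nonempty) polytope in `ℚ^d`: the convex hull of a nonempty finite
set of points. -/
def IsPolytope (σ : Set (Fin d → ℚ)) : Prop :=
  ∃ s : Finset (Fin d → ℚ), s.Nonempty ∧ σ = convexHull ℚ (s : Set (Fin d → ℚ))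

/-- The cone `C(σ) ⊆ ℚ ⊕ ℚ^d` over a set `σ ⊆ ℚ^d` placed at height `1`. -/
def coneOver (σ : Set (Fin d → ℚ)) : Set (ℚ × (Fin d → ℚ)) :=
  {p | ∃ t : ℚ, 0 ≤ t ∧ ∃ x ∈ σ, p = (t, t • x)}

/-- The dual cone of a subset of `ℚ ⊕ ℚ^d`, consisting of all linear functionals that are
nonnegative on it. -/
def dualCone (C : Set (ℚ × (Fin d → ℚ))) : Set ((ℚ × (Fin d → ℚ)) →ₗ[ℚ] ℚ) :=
  {φ | ∀ p ∈ C, 0 ≤ φ p}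

/-- A polytope decomposition of `ℚ^d`: a set of polytopes covering `ℚ^d`, closed under
taking faces (nonempty convex extreme subsets), such that any two members meeting
nontrivially meet in a common face. -/
def IsPolyDecomp (D : Set (Set (Fin d → ℚ))) : Prop :=
  (∀ σ ∈ D, IsPolytope σ) ∧
  (⋃₀ D = Set.univ) ∧
  (∀ σ ∈ D, ∀ τ : Set (Fin d → ℚ), τ.Nonempty → Convex ℚ τ → IsExtreme ℚ σ τ → τ ∈ D) ∧
  (∀ σ ∈ D, ∀ τ ∈ D, (σ ∩ τ).Nonempty →
    IsExtreme ℚ σ (σ ∩ τ) ∧ IsExtreme ℚ τ (σ ∩ τ))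

/-- The common refinement `Σ ⊓ Σ'` of two polytope decompositions: all nonempty
intersections `σ ∩ σ'`. -/
def meetDecomp (D D' : Set (Set (Fin d → ℚ))) : Set (Set (Fin d → ℚ)) :=
  {ρ | ∃ σ ∈ D, ∃ τ ∈ D', (σ ∩ τ).Nonempty ∧ ρ = σ ∩ τ}

/-- A polytope decomposition is `Y`-admissible for a subgroup `Y` of translations if it is
`Y`-stable and has only finitely many `Y`-orbits of cells. -/
def IsAdmissible (Y : AddSubgroup (Fin d → ℚ)) (D : Set (Set (Fin d → ℚ))) : Prop :=
  IsPolyDecomp D ∧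
  (∀ y ∈ Y, ∀ σ ∈ D, (fun x => y + x) '' σ ∈ D) ∧
  ∃ T : Set (Set (Fin d → ℚ)), T.Finite ∧
    ∀ σ ∈ D, ∃ τ ∈ T, ∃ y ∈ Y, σ = (fun x => y + x) '' τ




section Helpers
open Finset
namespace PD

def dotp {n : ℕ} (a x : Fin n → ℚ) : ℚ := ∑ i, a i * x i

lemma dotp_zero_left {n} (x : Fin n → ℚ) : dotp 0 x = 0 := by simp [dotp]

lemma dotp_add_right {n} (a x y : Fin n → ℚ) : dotp a (x + y) = dotp a x + dotp a y := by
  simp [dotp, mul_add, Finset.sum_add_distrib]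

lemma dotp_smul_right {n} (a : Fin n → ℚ) (c : ℚ) (x : Fin n → ℚ) :
    dotp a (c • x) = c * dotp a x := by
  simp only [dotp, Pi.smul_apply, smul_eq_mul, Finset.mul_sum]
  exact Finset.sum_congr rfl fun i _ => by ring

lemma dotp_smul_left {n} (a : Fin n → ℚ) (c : ℚ) (x : Fin n → ℚ) :
    dotp (c • a) x = c * dotp a x := by
  simp only [dotp, Pi.smul_apply, smul_eq_mul, Finset.mul_sum]
  exact Finset.sum_congr rfl fun i _ => by ring

lemma dotp_sub_left {n} (a b x : Fin n → ℚ) : dotp (a - b) x = dotp a x - dotp b x := by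
  simp [dotp, sub_mul, Finset.sum_sub_distrib]

lemma dotp_sub_right {n} (a x y : Fin n → ℚ) : dotp a (x - y) = dotp a x - dotp a y := by
  simp [dotp, mul_sub, Finset.sum_sub_distrib]

lemma dotp_neg_right {n} (a x : Fin n → ℚ) : dotp a (-x) = -dotp a x := by
  simp [dotp, mul_neg]

lemma dotp_snoc {n} (a : Fin (n+1) → ℚ) (x : Fin n → ℚ) (t : ℚ) :
    dotp a (Fin.snoc x t) = dotp (Fin.init a) x + a (Fin.last n) * t := by
  simp [dotp, Fin.sum_univ_castSucc, Fin.init, Fin.snoc_castSucc]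

lemma dotp_append {m n} (a : Fin m → ℚ) (b : Fin n → ℚ) (x : Fin m → ℚ) (y : Fin n → ℚ) :
    dotp (Fin.append a b) (Fin.append x y) = dotp a x + dotp b y := by
  simp [dotp, Fin.sum_univ_add]

/-- A polyhedron: finite intersection of closed half-spaces. -/
def IsPolyhedron {n : ℕ} (P : Set (Fin n → ℚ)) : Prop :=
  ∃ (ι : Type) (_ : Fintype ι) (a : ι → Fin n → ℚ) (b : ι → ℚ),
    P = {x | ∀ i, dotp (a i) x ≤ b i}

lemma IsPolyhedron.inter {n : ℕ} {P Q : Set (Fin n → ℚ)}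
    (hP : IsPolyhedron P) (hQ : IsPolyhedron Q) : IsPolyhedron (P ∩ Q) := by
  obtain ⟨ι, hι, a, b, rfl⟩ := hP
  obtain ⟨κ, hκ, a', b', rfl⟩ := hQ
  refine ⟨ι ⊕ κ, inferInstance, Sum.elim a a', Sum.elim b b', ?_⟩
  ext x
  constructor
  · rintro ⟨h1, h2⟩ (i | j) <;> simpa using (by first | exact h1 i | exact h2 j)
  · intro h
    exact ⟨fun i => h (Sum.inl i), fun j => h (Sum.inr j)⟩

lemma IsPolyhedron.convex {n : ℕ} {P : Set (Fin n → ℚ)} (hP : IsPolyhedron P) :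
    Convex ℚ P := by
  obtain ⟨ι, hι, a, b, rfl⟩ := hP
  intro x hx y hy s t hs ht hst
  intro i
  have := hx i; have := hy i
  rw [dotp_add_right, dotp_smul_right, dotp_smul_right]
  calc s * dotp (a i) x + t * dotp (a i) y ≤ s * b i + t * b i := by
        gcongr <;> assumption
    _ = b i := by rw [← add_mul, hst, one_mul]

/-- Fourier–Motzkin: eliminating the last coordinate of a polyhedron yields a polyhedron. -/
lemma fm_step {n : ℕ} {P : Set (Fin (n+1) → ℚ)} (hP : IsPolyhedron P) :
    IsPolyhedron {x : Fin n → ℚ | ∃ t : ℚ, Fin.snoc x t ∈ P} := by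
  classical
  obtain ⟨ι, hι, a, b, rfl⟩ := hP
  refine ⟨ι ⊕ ι × ι, inferInstance,
    Sum.elim (fun i => if a i (Fin.last n) = 0 then Fin.init (a i) else 0)
      (fun pm => if 0 < a pm.1 (Fin.last n) ∧ a pm.2 (Fin.last n) < 0 then
        a pm.1 (Fin.last n) • Fin.init (a pm.2) - a pm.2 (Fin.last n) • Fin.init (a pm.1)
        else 0),
    Sum.elim (fun i => if a i (Fin.last n) = 0 then b i else 0)
      (fun pm => if 0 < a pm.1 (Fin.last n) ∧ a pm.2 (Fin.last n) < 0 then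
        a pm.1 (Fin.last n) * b pm.2 - a pm.2 (Fin.last n) * b pm.1 else 0), ?_⟩
  ext x
  simp only [Set.mem_setOf_eq]
  constructor
  · rintro ⟨t, ht⟩ j
    have key : ∀ i, dotp (Fin.init (a i)) x + a i (Fin.last n) * t ≤ b i := by
      intro i; have := ht i; rwa [dotp_snoc] at this
    rcases j with i | ⟨p, m⟩
    · by_cases h : a i (Fin.last n) = 0
      · simp only [Sum.elim_inl, if_pos h]
        have := key i; rw [h] at this; linarith
      · simp only [Sum.elim_inl, if_neg h, dotp_zero_left, le_refl]
    · by_cases h : 0 < a p (Fin.last n) ∧ a m (Fin.last n) < 0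
      · simp only [Sum.elim_inr, if_pos h, dotp_sub_left, dotp_smul_left]
        have h1 : (-(a m (Fin.last n))) * (dotp (Fin.init (a p)) x + a p (Fin.last n) * t)
            ≤ (-(a m (Fin.last n))) * b p :=
          mul_le_mul_of_nonneg_left (key p) (by linarith [h.2])
        have h2 : a p (Fin.last n) * (dotp (Fin.init (a m)) x + a m (Fin.last n) * t)
            ≤ a p (Fin.last n) * b m :=
          mul_le_mul_of_nonneg_left (key m) (le_of_lt h.1)
        nlinarith [h1, h2]
      · simp only [Sum.elim_inr, if_neg h, dotp_zero_left, le_refl]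
  · intro hx
    have h0 : ∀ i, a i (Fin.last n) = 0 → dotp (Fin.init (a i)) x ≤ b i := by
      intro i hi
      have := hx (Sum.inl i)
      simpa only [Sum.elim_inl, if_pos hi] using this
    have hpm : ∀ p m, 0 < a p (Fin.last n) → a m (Fin.last n) < 0 →
        a p (Fin.last n) * dotp (Fin.init (a m)) x
          - a m (Fin.last n) * dotp (Fin.init (a p)) x
        ≤ a p (Fin.last n) * b m - a m (Fin.last n) * b p := by
      intro p m hp hm
      have := hx (Sum.inr (p, m))
      simpa only [Sum.elim_inr, if_pos (And.intro hp hm), dotp_sub_left, dotp_smul_left]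
        using this
    set Ip : Finset ι := univ.filter (fun i => 0 < a i (Fin.last n)) with hIp
    set Im : Finset ι := univ.filter (fun i => a i (Fin.last n) < 0) with hIm
    set r : ι → ℚ := fun i => (b i - dotp (Fin.init (a i)) x) / a i (Fin.last n) with hr
    by_cases hpne : Ip.Nonempty
    · refine ⟨Ip.inf' hpne r, ?_⟩
      intro i
      rw [dotp_snoc]
      rcases lt_trichotomy (a i (Fin.last n)) 0 with hci | hci | hci
      · obtain ⟨p, hpmem, hpeq⟩ := Finset.exists_mem_eq_inf' hpne r
        have hcp : 0 < a p (Fin.last n) := (Finset.mem_filter.mp hpmem).2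
        rw [hpeq]
        have hineq := hpm p i hcp hci
        have hrp : a i (Fin.last n) * r p
            = a i (Fin.last n) * (b p - dotp (Fin.init (a p)) x) / a p (Fin.last n) := by
          rw [hr]; ring
        have : a i (Fin.last n) * r p ≤ b i - dotp (Fin.init (a i)) x := by
          rw [hrp, div_le_iff₀ hcp]
          nlinarith [hineq]
        linarith
      · have := h0 i hci; rw [hci]; linarith
      · have himem : i ∈ Ip := Finset.mem_filter.mpr ⟨Finset.mem_univ i, hci⟩
        have hle : Ip.inf' hpne r ≤ r i := Finset.inf'_le r himem
        have h2 : a i (Fin.last n) * Ip.inf' hpne r ≤ a i (Fin.last n) * r i :=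
          mul_le_mul_of_nonneg_left hle (le_of_lt hci)
        have h3 : a i (Fin.last n) * r i = b i - dotp (Fin.init (a i)) x := by
          rw [hr, mul_div_cancel₀ _ (ne_of_gt hci)]
        linarith
    · by_cases hmne : Im.Nonempty
      · refine ⟨Im.sup' hmne r, ?_⟩
        intro i
        rw [dotp_snoc]
        rcases lt_trichotomy (a i (Fin.last n)) 0 with hci | hci | hci
        · have himem : i ∈ Im := Finset.mem_filter.mpr ⟨Finset.mem_univ i, hci⟩
          have hle : r i ≤ Im.sup' hmne r := Finset.le_sup' r himem
          have h2 : a i (Fin.last n) * Im.sup' hmne r ≤ a i (Fin.last n) * r i :=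
            mul_le_mul_of_nonpos_left hle (le_of_lt hci)
          have h3 : a i (Fin.last n) * r i = b i - dotp (Fin.init (a i)) x := by
            rw [hr, mul_div_cancel₀ _ (ne_of_lt hci)]
          linarith
        · have := h0 i hci; rw [hci]; linarith
        · exact absurd (Finset.mem_filter.mpr ⟨Finset.mem_univ i, hci⟩)
            (fun h => hpne ⟨i, h⟩)
      · refine ⟨0, ?_⟩
        intro i
        rw [dotp_snoc]
        rcases lt_trichotomy (a i (Fin.last n)) 0 with hci | hci | hci
        · exact absurd (Finset.mem_filter.mpr ⟨Finset.mem_univ i, hci⟩)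
            (fun h => hmne ⟨i, h⟩)
        · have := h0 i hci; rw [hci]; linarith
        · exact absurd (Finset.mem_filter.mpr ⟨Finset.mem_univ i, hci⟩)
            (fun h => hpne ⟨i, h⟩)

lemma fm_proj {n : ℕ} : ∀ (k : ℕ) (P : Set (Fin (n + k) → ℚ)), IsPolyhedron P →
    IsPolyhedron {x : Fin n → ℚ | ∃ y : Fin k → ℚ, Fin.append x y ∈ P} := by
  intro k
  induction k with
  | zero =>
    intro P hP
    have : {x : Fin n → ℚ | ∃ y : Fin 0 → ℚ, Fin.append x y ∈ P} = P := by
      ext x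
      simp only [Set.mem_setOf_eq]
      constructor
      · rintro ⟨y, hy⟩
        have : Fin.append x y = x := by
          funext i
          rw [show y = Fin.elim0 from funext fun i => i.elim0]
          exact congrFun (Fin.append_elim0 x) i
        rwa [this] at hy
      · intro hx
        refine ⟨Fin.elim0, ?_⟩
        rwa [show Fin.append x Fin.elim0 = x from Fin.append_elim0 x]
    rwa [this]
  | succ k ih =>
    intro P hP
    have step : IsPolyhedron {z : Fin (n + k) → ℚ | ∃ t : ℚ, Fin.snoc z t ∈ P} :=
      fm_step hP
    have := ih _ step
    have heq : {x : Fin n → ℚ | ∃ y : Fin k → ℚ,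
        Fin.append x y ∈ {z : Fin (n + k) → ℚ | ∃ t : ℚ, Fin.snoc z t ∈ P}}
        = {x : Fin n → ℚ | ∃ y : Fin (k+1) → ℚ, Fin.append x y ∈ P} := by
      ext x
      simp only [Set.mem_setOf_eq]
      constructor
      · rintro ⟨y, t, hyt⟩
        exact ⟨Fin.snoc y t, by rwa [Fin.append_snoc]⟩
      · rintro ⟨y, hy⟩
        refine ⟨Fin.init y, y (Fin.last k), ?_⟩
        rw [← Fin.append_snoc, Fin.snoc_init_self]
        exact hy
    rwa [heq] at this

lemma dotp_ite {n} (c : ℚ) (i : Fin n) (x : Fin n → ℚ) :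
    dotp (fun i' => if i' = i then c else 0) x = c * x i := by
  simp [dotp, ite_mul]

lemma dotp_const {n} (c : ℚ) (x : Fin n → ℚ) : dotp (fun _ => c) x = c * ∑ i, x i := by
  simp [dotp, Finset.mul_sum]

lemma dotp_fun {n} (a x : Fin n → ℚ) : dotp (fun i => a i) x = ∑ i, a i * x i := rfl

lemma fin_hull {n k : ℕ} (v : Fin k → Fin n → ℚ) :
    convexHull ℚ (Set.range v) =
      {x | ∃ w : Fin k → ℚ, (∀ j, 0 ≤ w j) ∧ ∑ j, w j = 1 ∧ ∑ j, w j • v j = x} := by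
  classical
  apply Set.Subset.antisymm
  · apply convexHull_min
    · rintro _ ⟨j, rfl⟩
      refine ⟨fun j' => if j' = j then 1 else 0, fun j' => by by_cases h : j' = j <;> simp [h], by simp, by
        simp [ite_smul]⟩
    · rintro x ⟨wx, hwx0, hwx1, rfl⟩ y ⟨wy, hwy0, hwy1, rfl⟩ s t hs ht hst
      refine ⟨fun j => s * wx j + t * wy j,
        fun j => add_nonneg (mul_nonneg hs (hwx0 j)) (mul_nonneg ht (hwy0 j)), ?_, ?_⟩
      · rw [Finset.sum_add_distrib, ← Finset.mul_sum, ← Finset.mul_sum, hwx1, hwy1]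
        simpa using hst
      · rw [Finset.smul_sum, Finset.smul_sum, ← Finset.sum_add_distrib]
        apply Finset.sum_congr rfl
        intro j _
        rw [add_smul, mul_smul, mul_smul]
  · rintro x ⟨w, hw0, hw1, rfl⟩
    have := Finset.centerMass_mem_convexHull (t := (univ : Finset (Fin k)))
      (w := w) (z := v) (fun i _ => hw0 i) (by rw [hw1]; norm_num)
      (fun i _ => Set.mem_range_self i)
    rwa [Finset.centerMass_eq_of_sum_1 _ _ hw1] at this

lemma weyl_range {n k : ℕ} (v : Fin k → Fin n → ℚ) :
    IsPolyhedron (convexHull ℚ (Set.range v)) := by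
  classical
  set A : (Fin k ⊕ (Bool ⊕ Fin n × Bool)) → Fin (n+k) → ℚ :=
    Sum.elim
      (fun j => Fin.append 0 (fun j' => if j' = j then (-1 : ℚ) else 0))
      (Sum.elim
        (fun s => Fin.append 0 (fun _ => if s then (1:ℚ) else -1))
        (fun p => Fin.append (fun i' => if i' = p.1 then (if p.2 then (1:ℚ) else -1) else 0)
          (fun j => if p.2 then -(v j p.1) else v j p.1))) with hA
  set B : (Fin k ⊕ (Bool ⊕ Fin n × Bool)) → ℚ :=
    Sum.elim (fun _ => 0)
      (Sum.elim (fun s => if s then 1 else -1) (fun _ => 0)) with hB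
  have hpoly : IsPolyhedron {z : Fin (n+k) → ℚ | ∀ i, dotp (A i) z ≤ B i} :=
    ⟨_, inferInstance, A, B, rfl⟩
  have hproj := fm_proj k _ hpoly
  have comm : ∀ (i : Fin n) (y : Fin k → ℚ), ∑ j, v j i * y j = ∑ j, y j * v j i := by
    intro i y; exact Finset.sum_congr rfl fun j _ => by ring
  have happ : ∀ (i : Fin n) (y : Fin k → ℚ), (∑ j, y j • v j) i = ∑ j, y j * v j i := by
    intro i y
    rw [Finset.sum_apply]
    exact Finset.sum_congr rfl fun j _ => rfl
  have mem_iff : ∀ (x : Fin n → ℚ) (y : Fin k → ℚ),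
      (∀ i, dotp (A i) (Fin.append x y) ≤ B i) ↔
      ((∀ j, 0 ≤ y j) ∧ ∑ j, y j = 1 ∧ ∑ j, y j • v j = x) := by
    intro x y
    have e1 : ∀ j, dotp (A (Sum.inl j)) (Fin.append x y) = -(y j) := by
      intro j
      simp only [hA, Sum.elim_inl, dotp_append, dotp_zero_left, zero_add, dotp_ite]
      ring
    have e2t : dotp (A (Sum.inr (Sum.inl true))) (Fin.append x y) = ∑ j, y j := by
      simp only [hA, Sum.elim_inr, Sum.elim_inl, if_true, dotp_append, dotp_zero_left,
        zero_add, dotp_const, one_mul]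
    have e2f : dotp (A (Sum.inr (Sum.inl false))) (Fin.append x y) = -∑ j, y j := by
      simp only [hA, Sum.elim_inr, Sum.elim_inl, if_false, dotp_append, dotp_zero_left,
        zero_add, dotp_const]
      norm_num
    have e3t : ∀ i, dotp (A (Sum.inr (Sum.inr (i, true)))) (Fin.append x y)
        = x i - ∑ j, y j * v j i := by
      intro i
      simp only [hA, Sum.elim_inr, dotp_append, if_true, dotp_ite, one_mul]
      rw [dotp_fun]
      simp only [neg_mul, Finset.sum_neg_distrib]
      rw [comm]
      ring
    have e3f : ∀ i, dotp (A (Sum.inr (Sum.inr (i, false)))) (Fin.append x y)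
        = -(x i) + ∑ j, y j * v j i := by
      intro i
      simp only [hA, Sum.elim_inr, dotp_append]
      norm_num [dotp_ite, dotp_fun]
      try rw [comm]
      try ring
    constructor
    · intro h
      refine ⟨fun j => by have := h (Sum.inl j); rw [e1 j] at this; simp [hB] at this; linarith,
        ?_, ?_⟩
      · have ht := h (Sum.inr (Sum.inl true)); rw [e2t] at ht
        have hf := h (Sum.inr (Sum.inl false)); rw [e2f] at hf
        simp [hB] at ht hf
        linarith
      · funext i
        have ht := h (Sum.inr (Sum.inr (i, true))); rw [e3t] at ht
        have hf := h (Sum.inr (Sum.inr (i, false))); rw [e3f] at hf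
        simp [hB] at ht hf
        rw [happ]
        linarith
    · rintro ⟨h0, h1, hcomb⟩ i
      rcases i with j | s | ⟨i, s⟩
      · rw [e1]; simp [hB]; linarith [h0 j]
      · cases s
        · rw [e2f]; simp [hB]; linarith
        · rw [e2t]; simp [hB]; linarith
      · have hx : x i = ∑ j, y j * v j i := by rw [← hcomb, happ]
        cases s
        · rw [e3f]; simp [hB]; linarith
        · rw [e3t]; simp [hB]; linarith
  have heq : {x : Fin n → ℚ | ∃ y : Fin k → ℚ,
      Fin.append x y ∈ {z : Fin (n+k) → ℚ | ∀ i, dotp (A i) z ≤ B i}}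
      = convexHull ℚ (Set.range v) := by
    rw [fin_hull]
    ext x
    simp only [Set.mem_setOf_eq]
    exact exists_congr fun y => mem_iff x y
  rwa [heq] at hproj

/-- Minkowski: a nonempty bounded polyhedron is the convex hull of a finite set. -/
lemma poly_minkowski {n : ℕ} {P : Set (Fin n → ℚ)} (hP : IsPolyhedron P)
    (hne : P.Nonempty) (hbd : ∃ R : ℚ, ∀ x ∈ P, ∀ i, |x i| ≤ R) :
    ∃ s : Finset (Fin n → ℚ), s.Nonempty ∧ P = convexHull ℚ (s : Set (Fin n → ℚ)) := by
  classical
  have hconv : Convex ℚ P := hP.convex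
  obtain ⟨ι, hι, a, b, hPeq⟩ := hP
  obtain ⟨R, hR⟩ := hbd
  set Vtx : Set (Fin n → ℚ) :=
    {x | x ∈ P ∧ ∀ u : Fin n → ℚ,
      (∀ i, dotp (a i) x = b i → dotp (a i) u = 0) → u = 0} with hVtx
  set slack : (Fin n → ℚ) → Finset ι :=
    fun x => univ.filter (fun i => dotp (a i) x ≠ b i) with hslack
  have hmemP : ∀ x, x ∈ P ↔ ∀ i, dotp (a i) x ≤ b i := by
    intro x; rw [hPeq]; rfl
  have hdir : ∀ x ∈ P, ∀ u : Fin n → ℚ, u ≠ 0 →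
      (∀ i, dotp (a i) x = b i → dotp (a i) u = 0) →
      ∃ z, z ∈ P ∧ slack z ⊂ slack x ∧ ∃ t : ℚ, 0 < t ∧ z = x + t • u := by
    intro x hx u hu horth
    have hxi := (hmemP x).mp hx
    have hHp : (univ.filter (fun i => 0 < dotp (a i) u)).Nonempty := by
      by_contra hemp
      have hnonpos : ∀ i, dotp (a i) u ≤ 0 := by
        intro i
        by_contra hpos
        exact hemp ⟨i, Finset.mem_filter.mpr ⟨Finset.mem_univ i, lt_of_not_ge hpos⟩⟩
      obtain ⟨i0, hi0⟩ := Function.ne_iff.mp hu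
      have hu0 : u i0 ≠ 0 := by simpa using hi0
      have hR0 : (0:ℚ) ≤ R := le_trans (abs_nonneg _) (hR x hx i0)
      have htpos : 0 < (2*R+1)/|u i0| := div_pos (by linarith) (abs_pos.mpr hu0)
      have hz : x + ((2*R+1)/|u i0|) • u ∈ P := by
        rw [hmemP]
        intro i
        rw [dotp_add_right, dotp_smul_right]
        have : (2*R+1)/|u i0| * dotp (a i) u ≤ 0 :=
          mul_nonpos_of_nonneg_of_nonpos (le_of_lt htpos) (hnonpos i)
        linarith [hxi i]
      have h1 : |x i0 + (2*R+1)/|u i0| * u i0| ≤ R := by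
        have := hR _ hz i0
        simpa using this
      have h2 : |(2*R+1)/|u i0| * u i0| = 2*R+1 := by
        rw [abs_mul, abs_of_pos htpos, div_mul_cancel₀ _ (abs_ne_zero.mpr hu0)]
      have h3 : |(2*R+1)/|u i0| * u i0| ≤ |x i0 + (2*R+1)/|u i0| * u i0| + |x i0| := by
        calc |(2*R+1)/|u i0| * u i0|
            = |(x i0 + (2*R+1)/|u i0| * u i0) + (-(x i0))| := by ring_nf
          _ ≤ |x i0 + (2*R+1)/|u i0| * u i0| + |(-(x i0))| := abs_add_le _ _
          _ = |x i0 + (2*R+1)/|u i0| * u i0| + |x i0| := by rw [abs_neg]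
      have h4 : |x i0| ≤ R := hR x hx i0
      linarith
    obtain ⟨i0, hi0mem, hi0eq⟩ := Finset.exists_mem_eq_inf' hHp
      (fun i => (b i - dotp (a i) x) / dotp (a i) u)
    have hd0 : 0 < dotp (a i0) u := (mem_filter.mp hi0mem).2
    set t : ℚ := (b i0 - dotp (a i0) x) / dotp (a i0) u with htdef
    have hle : ∀ i ∈ univ.filter (fun i => 0 < dotp (a i) u),
        t ≤ (b i - dotp (a i) x) / dotp (a i) u := by
      intro i hi
      rw [← hi0eq]
      exact Finset.inf'_le _ hi
    have hnt0 : dotp (a i0) x ≠ b i0 := fun h => absurd (horth i0 h) (ne_of_gt hd0)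
    have htpos : 0 < t :=
      div_pos (by have := hxi i0; cases lt_or_eq_of_le this with
        | inl h => linarith
        | inr h => exact absurd h hnt0) hd0
    have hz : x + t • u ∈ P := by
      rw [hmemP]
      intro i
      rw [dotp_add_right, dotp_smul_right]
      rcases le_or_gt (dotp (a i) u) 0 with hd | hd
      · have : t * dotp (a i) u ≤ 0 := mul_nonpos_of_nonneg_of_nonpos htpos.le hd
        linarith [hxi i]
      · have hi : i ∈ univ.filter (fun i => 0 < dotp (a i) u) :=
          mem_filter.mpr ⟨mem_univ i, hd⟩
        have h2 : t * dotp (a i) u ≤ b i - dotp (a i) x := by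
          calc t * dotp (a i) u
              ≤ ((b i - dotp (a i) x)/dotp (a i) u) * dotp (a i) u :=
                mul_le_mul_of_nonneg_right (hle i hi) hd.le
            _ = b i - dotp (a i) x := div_mul_cancel₀ _ (ne_of_gt hd)
        linarith
    have hsub : slack (x + t • u) ⊆ slack x := by
      intro i hi
      rw [hslack] at hi ⊢
      rw [mem_filter] at hi ⊢
      refine ⟨mem_univ i, ?_⟩
      intro heq
      apply hi.2
      rw [dotp_add_right, dotp_smul_right, heq, horth i heq, mul_zero, add_zero]
    have hi0tight : dotp (a i0) (x + t • u) = b i0 := by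
      rw [dotp_add_right, dotp_smul_right, htdef]
      field_simp
      ring
    have hi0slack : i0 ∈ slack x := by
      rw [hslack, mem_filter]
      exact ⟨mem_univ _, hnt0⟩
    have hi0not : i0 ∉ slack (x + t • u) := by
      rw [hslack, mem_filter]
      push_neg
      intro _
      exact hi0tight
    exact ⟨x + t • u, hz, (Finset.ssubset_iff_of_subset hsub).mpr ⟨i0, hi0slack, hi0not⟩,
      t, htpos, rfl⟩
  have hnv : ∀ x, x ∈ P → x ∉ Vtx →
      ∃ u, u ≠ 0 ∧ ∀ i, dotp (a i) x = b i → dotp (a i) u = 0 := by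
    intro x hx hv
    rw [hVtx, Set.mem_setOf_eq] at hv
    push_neg at hv
    obtain ⟨u, horth, hu⟩ := hv hx
    exact ⟨u, hu, horth⟩
  have key : ∀ N : ℕ, ∀ x, x ∈ P → (slack x).card ≤ N → x ∈ convexHull ℚ Vtx := by
    intro N
    induction N with
    | zero =>
      intro x hx hcard
      by_cases hv : x ∈ Vtx
      · exact subset_convexHull ℚ _ hv
      · exfalso
        obtain ⟨u, hu, horth⟩ := hnv x hx hv
        obtain ⟨z, _, hss, _⟩ := hdir x hx u hu horth
        have := Finset.card_lt_card hss
        omega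
    | succ N ih =>
      intro x hx hcard
      by_cases hv : x ∈ Vtx
      · exact subset_convexHull ℚ _ hv
      · obtain ⟨u, hu, horth⟩ := hnv x hx hv
        obtain ⟨z₁, hz₁P, hss₁, t₁, ht₁, hz₁⟩ := hdir x hx u hu horth
        have horth' : ∀ i, dotp (a i) x = b i → dotp (a i) (-u) = 0 := by
          intro i h
          rw [dotp_neg_right, horth i h, neg_zero]
        obtain ⟨z₂, hz₂P, hss₂, t₂, ht₂, hz₂⟩ := hdir x hx (-u) (neg_ne_zero.mpr hu) horth'
        have hc₁ : (slack z₁).card ≤ N := by have := Finset.card_lt_card hss₁; omega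
        have hc₂ : (slack z₂).card ≤ N := by have := Finset.card_lt_card hss₂; omega
        have hm₁ := ih z₁ hz₁P hc₁
        have hm₂ := ih z₂ hz₂P hc₂
        have hsum : (0:ℚ) < t₁ + t₂ := by linarith
        have hα0 : (0:ℚ) ≤ t₂/(t₁+t₂) := le_of_lt (div_pos ht₂ hsum)
        have hβ0 : (0:ℚ) ≤ t₁/(t₁+t₂) := le_of_lt (div_pos ht₁ hsum)
        have hαβ : t₂/(t₁+t₂) + t₁/(t₁+t₂) = 1 := by
          field_simp
          ring
        have hx_eq : x = (t₂/(t₁+t₂)) • z₁ + (t₁/(t₁+t₂)) • z₂ := by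
          rw [hz₁, hz₂]
          have h1 : t₂/(t₁+t₂) * t₁ = t₁/(t₁+t₂) * t₂ := by
            field_simp
          have hmod : (t₂/(t₁+t₂)) • (x + t₁ • u) + (t₁/(t₁+t₂)) • (x + t₂ • (-u))
              = (t₂/(t₁+t₂) + t₁/(t₁+t₂)) • x
                + (t₂/(t₁+t₂) * t₁ - t₁/(t₁+t₂) * t₂) • u := by
            module
          rw [hmod, hαβ, h1, sub_self, one_smul, zero_smul, add_zero]
        rw [hx_eq]
        exact (convex_convexHull ℚ Vtx) hm₁ hm₂ hα0 hβ0 hαβ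
  have hinj : Set.InjOn (fun x => univ.filter (fun i => dotp (a i) x = b i)) Vtx := by
    intro x hx y hy hxy
    have hxy' : univ.filter (fun i => dotp (a i) x = b i)
        = univ.filter (fun i => dotp (a i) y = b i) := hxy
    have h0 : y - x = 0 := by
      apply hx.2 (y - x)
      intro i hi
      have hiy : dotp (a i) y = b i := by
        have hmem : i ∈ univ.filter (fun i => dotp (a i) x = b i) :=
          mem_filter.mpr ⟨mem_univ i, hi⟩
        rw [hxy'] at hmem
        exact (mem_filter.mp hmem).2
      rw [dotp_sub_right, hi, hiy, sub_self]
    have := sub_eq_zero.mp h0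
    exact this.symm
  have hfin : Vtx.Finite := Set.Finite.of_finite_image (Set.toFinite _) hinj
  refine ⟨hfin.toFinset, ?_, ?_⟩
  · obtain ⟨x0, hx0⟩ := hne
    have hx0m := key (slack x0).card x0 hx0 le_rfl
    rcases Set.eq_empty_or_nonempty Vtx with hE | hNE
    · rw [hE] at hx0m
      simp at hx0m
    · obtain ⟨v, hv⟩ := hNE
      exact ⟨v, hfin.mem_toFinset.mpr hv⟩
  · rw [Set.Finite.coe_toFinset]
    apply Set.Subset.antisymm
    · intro x hx
      exact key _ x hx le_rfl
    · exact convexHull_min (fun x hx => hx.1) hconv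

lemma row_le {n : ℕ} (s : Finset (Fin n → ℚ)) {y : Fin n → ℚ} (hy : y ∈ s) :
    (∑ i' : Fin n, |y i'|) ≤ ∑ y' ∈ s, ∑ i' : Fin n, |y' i'| := by
  classical
  have h : ({y} : Finset (Fin n → ℚ)) ⊆ s := Finset.singleton_subset_iff.mpr hy
  calc (∑ i' : Fin n, |y i'|) = ∑ y' ∈ ({y} : Finset (Fin n → ℚ)), ∑ i' : Fin n, |y' i'| := by
        simp
    _ ≤ ∑ y' ∈ s, ∑ i' : Fin n, |y' i'| := Finset.sum_le_sum_of_subset_of_nonneg h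
        (fun _ _ _ => Finset.sum_nonneg fun _ _ => abs_nonneg _)

lemma wt_le_one {n : ℕ} {S : Finset (Fin n → ℚ)} {ν : (Fin n → ℚ) → ℚ}
    (h0 : ∀ z ∈ S, 0 ≤ ν z) (h1 : ∑ y ∈ S, ν y = 1) {z : Fin n → ℚ} (hz : z ∈ S) :
    ν z ≤ 1 := by
  classical
  have h : ({z} : Finset (Fin n → ℚ)) ⊆ S := Finset.singleton_subset_iff.mpr hz
  have : ν z = ∑ y ∈ ({z} : Finset (Fin n → ℚ)), ν y := by simp
  rw [this, ← h1]
  exact Finset.sum_le_sum_of_subset_of_nonneg h (fun x hx _ => h0 x hx)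

lemma polytope_bounded {n : ℕ} (s : Finset (Fin n → ℚ)) :
    ∃ R : ℚ, ∀ x ∈ convexHull ℚ (s : Set (Fin n → ℚ)), ∀ i, |x i| ≤ R := by
  classical
  refine ⟨∑ y ∈ s, ∑ i : Fin n, |y i|, fun x hx i => ?_⟩
  have hconv : Convex ℚ {x : Fin n → ℚ | ∀ i, |x i| ≤ ∑ y ∈ s, ∑ i : Fin n, |y i|} := by
    intro x hx y hy p q hp hq hpq i
    have h1 := hx i
    have h2 := hy i
    have h3 : |(p • x + q • y) i| ≤ p * |x i| + q * |y i| := by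
      have h4 := abs_add_le (p * x i) (q * y i)
      have e : (p • x + q • y) i = p * x i + q * y i := rfl
      rw [e]
      rw [abs_mul, abs_mul, abs_of_nonneg hp, abs_of_nonneg hq] at h4
      exact h4
    have hB0 : p * |x i| + q * |y i|
        ≤ p * (∑ y ∈ s, ∑ i : Fin n, |y i|) + q * (∑ y ∈ s, ∑ i : Fin n, |y i|) := by
      gcongr
    have hB1 : p * (∑ y ∈ s, ∑ i : Fin n, |y i|) + q * (∑ y ∈ s, ∑ i : Fin n, |y i|)
        = ∑ y ∈ s, ∑ i : Fin n, |y i| := by rw [← add_mul, hpq, one_mul]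
    linarith
  have hsub : (s : Set (Fin n → ℚ)) ⊆ {x | ∀ i, |x i| ≤ ∑ y ∈ s, ∑ i : Fin n, |y i|} := by
    intro y hy i
    have h1 : |y i| ≤ ∑ i' : Fin n, |y i'| :=
      Finset.single_le_sum (f := fun i' => |y i'|) (fun _ _ => abs_nonneg _) (mem_univ i)
    have h2 : (∑ i' : Fin n, |y i'|) ≤ ∑ y' ∈ s, ∑ i' : Fin n, |y' i'| :=
      row_le s (Finset.mem_coe.mp hy)
    linarith
  exact convexHull_min hsub hconv hx i

lemma extreme_absorb {n : ℕ} {P R : Set (Fin n → ℚ)} (hconv : Convex ℚ P)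
    (hext : IsExtreme ℚ P R) (w' : Finset (Fin n → ℚ)) :
    (w' : Set (Fin n → ℚ)) ⊆ P → ∀ μ : (Fin n → ℚ) → ℚ,
      (∀ y ∈ w', 0 < μ y) → ∑ y ∈ w', μ y = 1 → ∀ x ∈ R, ∑ y ∈ w', μ y • y = x →
      (w' : Set (Fin n → ℚ)) ⊆ R := by
  classical
  induction w' using Finset.strongInduction with
  | _ w' ih =>
    intro hw'P μ hpos hsum x hxR hrep
    rcases Finset.eq_empty_or_nonempty w' with rfl | ⟨v, hv⟩
    · simp
    · have hvP : v ∈ P := hw'P hv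
      set w'' := w'.erase v with hw''
      have hcv : 0 < μ v := hpos v hv
      have hadd : μ v + ∑ y ∈ w'', μ y = 1 := by
        rw [hw'', Finset.add_sum_erase _ μ hv]
        exact hsum
      have haddv : μ v • v + ∑ y ∈ w'', μ y • y = x := by
        rw [hw'', Finset.add_sum_erase _ (fun z => μ z • z) hv]
        exact hrep
      rcases Finset.eq_empty_or_nonempty w'' with hempty | hne''
      · -- w' = {v}
        rw [hempty, Finset.sum_empty] at hadd haddv
        have hμv : μ v = 1 := by linarith
        have hxv : x = v := by
          rw [← haddv, hμv, one_smul, add_zero]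
        intro z hz
        rw [hw''] at hempty
        have : w' = {v} := by
          apply Finset.eq_singleton_iff_unique_mem.mpr
          refine ⟨hv, fun z' hz' => ?_⟩
          by_contra hne
          exact absurd (Finset.mem_erase.mpr ⟨hne, hz'⟩) (by rw [hempty]; simp)
        rw [this] at hz
        simp only [Finset.coe_singleton, Set.mem_singleton_iff] at hz
        rw [hz, ← hxv]
        exact hxR
      · have hsum'' : 0 < ∑ y ∈ w'', μ y :=
          Finset.sum_pos (fun y hy => hpos y (Finset.mem_of_mem_erase hy)) hne''
        have hc1 : μ v < 1 := by linarith
        have h1c : (0:ℚ) < 1 - μ v := by linarith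
        set y0 : Fin n → ℚ := (1 - μ v)⁻¹ • ∑ y ∈ w'', μ y • y with hy0
        have hw''P : (w'' : Set (Fin n → ℚ)) ⊆ P :=
          Set.Subset.trans (by exact_mod_cast Finset.coe_subset.mpr (Finset.erase_subset _ _)) hw'P
        have hcomb'' : ∑ y ∈ w'', (μ y / (1 - μ v)) = 1 := by
          rw [← Finset.sum_div]
          rw [div_eq_one_iff_eq (ne_of_gt h1c)]
          linarith
        have hcombv : ∑ y ∈ w'', (μ y / (1 - μ v)) • y = y0 := by
          rw [hy0, Finset.smul_sum]
          apply Finset.sum_congr rfl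
          intro z hz
          rw [smul_smul, div_eq_inv_mul]
        have hy0P : y0 ∈ P := by
          have : y0 ∈ convexHull ℚ (w'' : Set (Fin n → ℚ)) := by
            rw [Finset.mem_convexHull']
            exact ⟨fun z => μ z / (1 - μ v),
              fun z hz => le_of_lt (div_pos (hpos z (Finset.mem_of_mem_erase hz)) h1c),
              hcomb'', hcombv⟩
          exact convexHull_min hw''P hconv this
        have hseg : x ∈ openSegment ℚ v y0 := by
          refine ⟨μ v, 1 - μ v, hcv, h1c, by ring, ?_⟩
          rw [hy0, smul_inv_smul₀ (ne_of_gt h1c)]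
          exact haddv
        have hvR := hext.2 hvP hy0P hxR hseg
        have hy0R := hext.2 hy0P hvP hxR (by rw [openSegment_symm]; exact hseg)
        have hw''R : (w'' : Set (Fin n → ℚ)) ⊆ R := by
          apply ih w'' (Finset.erase_ssubset hv) hw''P (fun z => μ z / (1 - μ v))
            (fun z hz => div_pos (hpos z (Finset.mem_of_mem_erase hz)) h1c)
            hcomb'' y0 hy0R hcombv
        intro z hz
        rcases eq_or_ne z v with rfl | hzv
        · exact hvR
        · exact hw''R (Finset.mem_coe.mpr (Finset.mem_erase.mpr ⟨hzv, Finset.mem_coe.mp hz⟩))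

lemma relint_point {n : ℕ} {w : Finset (Fin n → ℚ)} {R : Set (Fin n → ℚ)}
    (hRne : R.Nonempty) (hRconv : Convex ℚ R)
    (hext : IsExtreme ℚ (convexHull ℚ (w : Set (Fin n → ℚ))) R) :
    ∃ x ∈ R, ∀ y ∈ R, ∃ μ : ℚ, 0 < μ ∧ x + μ • (x - y) ∈ R := by
  classical
  set S : Finset (Fin n → ℚ) := w.filter (· ∈ R) with hSdef
  have hSR : (S : Set (Fin n → ℚ)) ⊆ R := by
    intro z hz
    exact (Finset.mem_filter.mp (Finset.mem_coe.mp hz)).2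
  have hS : R = convexHull ℚ (S : Set (Fin n → ℚ)) := by
    apply Set.Subset.antisymm
    · intro x hxR
      have hxP : x ∈ convexHull ℚ (w : Set (Fin n → ℚ)) := hext.1 hxR
      rw [Finset.mem_convexHull'] at hxP
      obtain ⟨μ, hμ0, hμ1, hμc⟩ := hxP
      set w' := w.filter (fun z => 0 < μ z) with hw'
      have hsum' : ∑ y ∈ w', μ y = 1 := by
        rw [hw', Finset.sum_filter_of_ne, hμ1]
        intro z hz hne
        exact lt_of_le_of_ne (hμ0 z hz) (Ne.symm hne)
      have hcomb' : ∑ y ∈ w', μ y • y = x := by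
        rw [hw', Finset.sum_filter_of_ne, hμc]
        intro z hz hne
        have : μ z ≠ 0 := fun h => hne (by rw [h, zero_smul])
        exact lt_of_le_of_ne (hμ0 z hz) (Ne.symm this)
      have hw'P : (w' : Set (Fin n → ℚ)) ⊆ convexHull ℚ (w : Set (Fin n → ℚ)) :=
        Set.Subset.trans (by exact_mod_cast Finset.coe_subset.mpr (Finset.filter_subset _ _))
          (subset_convexHull ℚ _)
      have habs : (w' : Set (Fin n → ℚ)) ⊆ R :=
        extreme_absorb (convex_convexHull ℚ _) hext w' hw'P μ
          (fun z hz => (Finset.mem_filter.mp hz).2) hsum' x hxR hcomb'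
      have hw'S : w' ⊆ S := by
        intro z hz
        rw [hSdef, Finset.mem_filter]
        exact ⟨(Finset.mem_filter.mp hz).1, habs (Finset.mem_coe.mpr hz)⟩
      have : x ∈ convexHull ℚ (w' : Set (Fin n → ℚ)) := by
        rw [Finset.mem_convexHull']
        exact ⟨μ, fun z hz => le_of_lt ((Finset.mem_filter.mp hz).2), hsum', hcomb'⟩
      exact convexHull_mono (by exact_mod_cast Finset.coe_subset.mpr hw'S) this
    · exact convexHull_min hSR hRconv
  have hSne : S.Nonempty := by
    obtain ⟨x0, hx0⟩ := hRne
    rcases Finset.eq_empty_or_nonempty S with hE | hNE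
    · rw [hS, hE] at hx0
      simp at hx0
    · exact hNE
  have hm : (0:ℚ) < (S.card : ℚ) := by
    exact_mod_cast Finset.card_pos.mpr hSne
  set m : ℚ := (S.card : ℚ) with hmdef
  set xs : Fin n → ℚ := ∑ y ∈ S, m⁻¹ • y with hxs
  have hxsR : xs ∈ R := by
    rw [hS, Finset.mem_convexHull']
    refine ⟨fun _ => m⁻¹, fun _ _ => le_of_lt (inv_pos.mpr hm), ?_, rfl⟩
    rw [Finset.sum_const, nsmul_eq_mul, hmdef, mul_inv_cancel₀ (ne_of_gt hm)]
  refine ⟨xs, hxsR, ?_⟩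
  intro y hy
  have hyS : y ∈ convexHull ℚ (S : Set (Fin n → ℚ)) := by rw [← hS]; exact hy
  rw [Finset.mem_convexHull'] at hyS
  obtain ⟨ν, hν0, hν1, hνc⟩ := hyS
  refine ⟨m⁻¹, inv_pos.mpr hm, ?_⟩
  have hνle : ∀ z ∈ S, ν z ≤ 1 := fun z hz => wt_le_one hν0 hν1 hz
  rw [hS, Finset.mem_convexHull']
  refine ⟨fun z => (1 + m⁻¹)/m - m⁻¹ * ν z, ?_, ?_, ?_⟩
  · intro z hz
    have h1 : m⁻¹ * ν z ≤ m⁻¹ * 1 :=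
      mul_le_mul_of_nonneg_left (hνle z hz) (le_of_lt (inv_pos.mpr hm))
    have h2 : (1 + m⁻¹)/m - m⁻¹ = (m^2)⁻¹ := by
      field_simp
      ring
    have h3 : (0:ℚ) < (m^2)⁻¹ := inv_pos.mpr (pow_pos hm 2)
    linarith
  · rw [Finset.sum_sub_distrib, Finset.sum_const, ← Finset.mul_sum, hν1, nsmul_eq_mul]
    rw [← hmdef]
    field_simp
    ring
  · have e1 : ∑ z ∈ S, ((1 + m⁻¹)/m - m⁻¹ * ν z) • z
        = ∑ z ∈ S, (((1 + m⁻¹)/m) • z - (m⁻¹ * ν z) • z) := by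
      apply Finset.sum_congr rfl
      intro z hz
      rw [sub_smul]
    rw [e1, Finset.sum_sub_distrib]
    have e2 : ∑ z ∈ S, ((1 + m⁻¹)/m) • z = (1 + m⁻¹) • xs := by
      rw [hxs, Finset.smul_sum]
      apply Finset.sum_congr rfl
      intro z hz
      rw [smul_smul, div_eq_mul_inv]
    have e3 : ∑ z ∈ S, (m⁻¹ * ν z) • z = m⁻¹ • y := by
      rw [← hνc, Finset.smul_sum]
      apply Finset.sum_congr rfl
      intro z hz
      rw [smul_smul]
    rw [e2, e3]
    module

/-- The minimal face of a convex set `σ` through a point `x`. -/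
def visFace {n : ℕ} (σ : Set (Fin n → ℚ)) (x : Fin n → ℚ) : Set (Fin n → ℚ) :=
  {y ∈ σ | ∃ μ : ℚ, 0 < μ ∧ x + μ • (x - y) ∈ σ}

lemma mem_visFace_self {n : ℕ} {σ : Set (Fin n → ℚ)} {x : Fin n → ℚ} (hx : x ∈ σ) :
    x ∈ visFace σ x :=
  ⟨hx, 1, one_pos, by simpa using hx⟩

lemma visFace_subset {n : ℕ} {σ : Set (Fin n → ℚ)} {x : Fin n → ℚ} :
    visFace σ x ⊆ σ := fun _ hy => hy.1

lemma visFace_convex {n : ℕ} {σ : Set (Fin n → ℚ)} (hσ : Convex ℚ σ) (x : Fin n → ℚ) :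
    Convex ℚ (visFace σ x) := by
  rintro y₁ ⟨hy₁, μ₁, hμ₁, hq₁⟩ y₂ ⟨hy₂, μ₂, hμ₂, hq₂⟩ p q hp hq hpq
  refine ⟨hσ hy₁ hy₂ hp hq hpq, ?_⟩
  have hden : 0 < p/μ₁ + q/μ₂ := by
    rcases eq_or_lt_of_le hp with hp0 | hp0
    · have hq1 : q = 1 := by linarith
      rw [← hp0, hq1]
      simp only [zero_div, zero_add]
      positivity
    · have h1 : 0 < p/μ₁ := div_pos hp0 hμ₁
      have h2 : 0 ≤ q/μ₂ := div_nonneg hq (le_of_lt hμ₂)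
      linarith
  obtain ⟨μ, hμdef⟩ : ∃ μ : ℚ, μ = (p/μ₁ + q/μ₂)⁻¹ := ⟨_, rfl⟩
  have hμpos : 0 < μ := hμdef ▸ inv_pos.mpr hden
  obtain ⟨lam, hlam⟩ : ∃ lam : ℚ, lam = μ * (p/μ₁) := ⟨_, rfl⟩
  have hA : lam * μ₁ = μ * p := by
    rw [hlam]
    field_simp
  have hB : (1 - lam) * μ₂ = μ * q := by
    have h1 : lam + μ * (q/μ₂) = 1 := by
      rw [hlam, ← mul_add, hμdef, inv_mul_cancel₀ (ne_of_gt hden)]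
    have h2 : (1 - lam) = μ * (q/μ₂) := by linarith
    rw [h2]
    field_simp
  have hlam0 : 0 ≤ lam := by
    rw [hlam]
    positivity
  have h1lam0 : 0 ≤ 1 - lam := by
    have h1 : 0 ≤ μ * q := mul_nonneg (le_of_lt hμpos) hq
    nlinarith [hB]
  refine ⟨μ, hμpos, ?_⟩
  have hgoal : x + μ • (x - (p • y₁ + q • y₂))
      = lam • (x + μ₁ • (x - y₁)) + (1 - lam) • (x + μ₂ • (x - y₂)) := by
    match_scalars
    · linear_combination -hA - hB - μ*hpq
    · linear_combination hA
    · linear_combination hB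
  rw [hgoal]
  exact hσ hq₁ hq₂ hlam0 h1lam0 (by ring)

lemma visFace_isExtreme {n : ℕ} {σ : Set (Fin n → ℚ)} (hσ : Convex ℚ σ) {x : Fin n → ℚ}
    (hx : x ∈ σ) : IsExtreme ℚ σ (visFace σ x) := by
  constructor
  · exact visFace_subset
  · have main : ∀ y₁ ∈ σ, ∀ y₂ ∈ σ, ∀ p ∈ visFace σ x,
        ∀ c₁ c₂ : ℚ, 0 < c₁ → 0 < c₂ → c₁ + c₂ = 1 → c₁ • y₁ + c₂ • y₂ = p →
        y₁ ∈ visFace σ x := by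
      intro y₁ hy₁ y₂ hy₂ p hp c₁ c₂ hc₁ hc₂ hc₁₂ hcomb
      obtain ⟨hpσ, μ, hμ, hqσ⟩ := hp
      obtain ⟨D, hD⟩ : ∃ D : ℚ, D = 1 + μ * c₂ := ⟨_, rfl⟩
      have hDpos : 0 < D := by rw [hD]; positivity
      have hDne : D ≠ 0 := ne_of_gt hDpos
      refine ⟨hy₁, μ * c₁ / D, div_pos (by positivity) hDpos, ?_⟩
      have hsum1 : 1/D + μ * c₂/D = 1 := by
        rw [← add_div, hD, div_self (by rw [← hD]; exact hDne)]
      have hid : x + (μ * c₁ / D) • (x - y₁)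
          = (1/D) • (x + μ • (x - p)) + (μ * c₂/D) • y₂ := by
        rw [← hcomb]
        match_scalars <;> field_simp
        all_goals
          first
            | linear_combination hD + μ * hc₁₂
            | linear_combination -hD - μ * hc₁₂
            | linear_combination (μ * c₂) * hD
            | linear_combination -(μ * c₂) * hD
            | linear_combination μ * hc₁₂
            | linear_combination hD
            | linear_combination -hD
            | (subst hD; ring)
      rw [hid]
      exact hσ hqσ hy₂ (by positivity) (by positivity) hsum1
    rintro y₁ hy₁ y₂ hy₂ p hp ⟨c₁, c₂, hc₁, hc₂, hc₁₂, hcomb⟩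
    · exact main y₁ hy₁ y₂ hy₂ p hp c₁ c₂ hc₁ hc₂ hc₁₂ hcomb

lemma polytope_polyhedron {σ : Set (Fin d → ℚ)} (h : IsPolytope σ) : IsPolyhedron σ := by
  obtain ⟨s, hsne, rfl⟩ := h
  have hrange : (s : Set (Fin d → ℚ))
      = Set.range (fun i : Fin s.card => (s.equivFin.symm i : Fin d → ℚ)) := by
    ext z
    constructor
    · intro hz
      exact ⟨s.equivFin ⟨z, hz⟩, by simp⟩
    · rintro ⟨i, rfl⟩
      exact Finset.mem_coe.mpr (s.equivFin.symm i).2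
  rw [hrange]
  exact weyl_range _

lemma inter_polytope {σ τ : Set (Fin d → ℚ)} (h1 : IsPolytope σ) (h2 : IsPolytope τ)
    (hne : (σ ∩ τ).Nonempty) : IsPolytope (σ ∩ τ) := by
  have hbd : ∃ R : ℚ, ∀ x ∈ σ ∩ τ, ∀ i, |x i| ≤ R := by
    obtain ⟨s, hsne, hs⟩ := h1
    obtain ⟨R, hR⟩ := polytope_bounded s
    exact ⟨R, fun x hx i => hR x (hs ▸ hx.1) i⟩
  obtain ⟨w, hwne, hw⟩ :=
    poly_minkowski ((polytope_polyhedron h1).inter (polytope_polyhedron h2)) hne hbd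
  exact ⟨w, hwne, hw⟩

lemma isExtreme_inter_cross {A B C E : Set (Fin d → ℚ)}
    (h1 : IsExtreme ℚ A B) (h2 : IsExtreme ℚ C E) : IsExtreme ℚ (A ∩ C) (B ∩ E) := by
  constructor
  · exact Set.inter_subset_inter h1.1 h2.1
  · intro x₁ hx₁ x₂ hx₂ x hx hseg
    exact ⟨h1.2 hx₁.1 hx₂.1 hx.1 hseg, h2.2 hx₁.2 hx₂.2 hx.2 hseg⟩

lemma polytope_convex {σ : Set (Fin d → ℚ)} (h : IsPolytope σ) : Convex ℚ σ := by
  obtain ⟨s, _, rfl⟩ := h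
  exact convex_convexHull ℚ _

end PD
end Helpers

/-- Let `Σ` and `Σ'` be polytope decompositions of `ℚ^d`.  Then
`Σ ⊓ Σ'` (the set of nonempty intersections `σ ∩ σ'`) is a polytope decomposition of
`ℚ^d`, and it is a common subdivision of `Σ` and `Σ'`: every cell of `Σ ⊓ Σ'` is
contained in a cell of `Σ` and in a cell of `Σ'`. -/
theorem meetDecomp_isPolyDecomp {D D' : Set (Set (Fin d → ℚ))}
    (hD : IsPolyDecomp D) (hD' : IsPolyDecomp D') :
    IsPolyDecomp (meetDecomp D D') ∧
    ∀ ρ ∈ meetDecomp D D', (∃ σ ∈ D, ρ ⊆ σ) ∧ (∃ τ ∈ D', ρ ⊆ τ) := by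
  classical
  obtain ⟨hP1, hCov1, hFace1, hMeet1⟩ := hD
  obtain ⟨hP2, hCov2, hFace2, hMeet2⟩ := hD'
  have hsub : ∀ ρ ∈ meetDecomp D D', (∃ σ ∈ D, ρ ⊆ σ) ∧ (∃ τ ∈ D', ρ ⊆ τ) := by
    rintro ρ ⟨σ, hσ, τ, hτ, hne, rfl⟩
    exact ⟨⟨σ, hσ, Set.inter_subset_left⟩, ⟨τ, hτ, Set.inter_subset_right⟩⟩
  refine ⟨⟨?_, ?_, ?_, ?_⟩, hsub⟩
  · -- each cell is a polytope
    rintro ρ ⟨σ, hσ, τ, hτ, hne, rfl⟩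
    exact PD.inter_polytope (hP1 σ hσ) (hP2 τ hτ) hne
  · -- covering
    apply Set.eq_univ_of_forall
    intro x
    have hx1 : x ∈ ⋃₀ D := by rw [hCov1]; trivial
    have hx2 : x ∈ ⋃₀ D' := by rw [hCov2]; trivial
    obtain ⟨σ, hσ, hxσ⟩ := hx1
    obtain ⟨τ, hτ, hxτ⟩ := hx2
    exact ⟨σ ∩ τ, ⟨σ, hσ, τ, hτ, ⟨x, hxσ, hxτ⟩, rfl⟩, hxσ, hxτ⟩
  · -- closed under faces
    rintro ρ ⟨σ, hσ, τ, hτ, hne, rfl⟩ R hRne hRconv hRext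
    obtain ⟨w, hwne, hw⟩ := PD.inter_polytope (hP1 σ hσ) (hP2 τ hτ) hne
    have hRext' : IsExtreme ℚ (convexHull ℚ (w : Set (Fin d → ℚ))) R := hw ▸ hRext
    obtain ⟨x, hxR, hrel⟩ := PD.relint_point hRne hRconv hRext'
    have hxρ : x ∈ σ ∩ τ := hRext.1 hxR
    have hσconv : Convex ℚ σ := PD.polytope_convex (hP1 σ hσ)
    have hτconv : Convex ℚ τ := PD.polytope_convex (hP2 τ hτ)
    have hFσ : PD.visFace σ x ∈ D :=
      hFace1 σ hσ _ ⟨x, PD.mem_visFace_self hxρ.1⟩ (PD.visFace_convex hσconv x)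
        (PD.visFace_isExtreme hσconv hxρ.1)
    have hGτ : PD.visFace τ x ∈ D' :=
      hFace2 τ hτ _ ⟨x, PD.mem_visFace_self hxρ.2⟩ (PD.visFace_convex hτconv x)
        (PD.visFace_isExtreme hτconv hxρ.2)
    refine ⟨PD.visFace σ x, hFσ, PD.visFace τ x, hGτ,
      ⟨x, PD.mem_visFace_self hxρ.1, PD.mem_visFace_self hxρ.2⟩, ?_⟩
    apply Set.Subset.antisymm
    · intro y hyR
      have hyρ : y ∈ σ ∩ τ := hRext.1 hyR
      obtain ⟨μ, hμ, hμR⟩ := hrel y hyR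
      have hμρ : x + μ • (x - y) ∈ σ ∩ τ := hRext.1 hμR
      exact ⟨⟨hyρ.1, μ, hμ, hμρ.1⟩, ⟨hyρ.2, μ, hμ, hμρ.2⟩⟩
    · rintro z ⟨⟨hzσ, μ₁, hμ₁, hq₁⟩, ⟨hzτ, μ₂, hμ₂, hq₂⟩⟩
      have hμ : 0 < min μ₁ μ₂ := lt_min hμ₁ hμ₂
      have key : ∀ (c μ' : ℚ), c * μ' = min μ₁ μ₂ →
          (1 - c) • x + c • (x + μ' • (x - z)) = x + (min μ₁ μ₂) • (x - z) := by
        intro c μ' hc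
        match_scalars
        · linear_combination hc
        · linear_combination -hc
      have hb₁ : min μ₁ μ₂ / μ₁ ≤ 1 := by
        rw [div_le_one hμ₁]
        exact min_le_left _ _
      have hb₂ : min μ₁ μ₂ / μ₂ ≤ 1 := by
        rw [div_le_one hμ₂]
        exact min_le_right _ _
      have hqσ : x + (min μ₁ μ₂) • (x - z) ∈ σ := by
        rw [← key (min μ₁ μ₂ / μ₁) μ₁ (div_mul_cancel₀ _ (ne_of_gt hμ₁))]
        exact hσconv hxρ.1 hq₁ (by linarith) (by positivity) (by ring)
      have hqτ : x + (min μ₁ μ₂) • (x - z) ∈ τ := by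
        rw [← key (min μ₁ μ₂ / μ₂) μ₂ (div_mul_cancel₀ _ (ne_of_gt hμ₂))]
        exact hτconv hxρ.2 hq₂ (by linarith) (by positivity) (by ring)
      have h1μ : (0:ℚ) < 1 + min μ₁ μ₂ := by linarith
      have h1μne : (1:ℚ) + min μ₁ μ₂ ≠ 0 := ne_of_gt h1μ
      have hseg : x ∈ openSegment ℚ z (x + (min μ₁ μ₂) • (x - z)) := by
        refine ⟨min μ₁ μ₂ / (1 + min μ₁ μ₂), 1 / (1 + min μ₁ μ₂),
          div_pos hμ h1μ, div_pos one_pos h1μ, ?_, ?_⟩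
        · field_simp
          ring
        · match_scalars <;> field_simp <;> ring
      have hzR := hRext.2 ⟨hzσ, hzτ⟩ ⟨hqσ, hqτ⟩ hxR hseg
      exact hzR
  · -- pairwise meets are common faces
    rintro ρ₁ ⟨σ₁, hσ₁, τ₁, hτ₁, hne₁, rfl⟩ ρ₂ ⟨σ₂, hσ₂, τ₂, hτ₂, hne₂, rfl⟩ hmeet
    have hseq : (σ₁ ∩ τ₁) ∩ (σ₂ ∩ τ₂) = (σ₁ ∩ σ₂) ∩ (τ₁ ∩ τ₂) := by
      ext z
      constructor
      · rintro ⟨⟨h1, h2⟩, ⟨h3, h4⟩⟩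
        exact ⟨⟨h1, h3⟩, ⟨h2, h4⟩⟩
      · rintro ⟨⟨h1, h3⟩, ⟨h2, h4⟩⟩
        exact ⟨⟨h1, h2⟩, ⟨h3, h4⟩⟩
    have hneσ : (σ₁ ∩ σ₂).Nonempty := by
      obtain ⟨z, hz⟩ := hmeet
      exact ⟨z, hz.1.1, hz.2.1⟩
    have hneτ : (τ₁ ∩ τ₂).Nonempty := by
      obtain ⟨z, hz⟩ := hmeet
      exact ⟨z, hz.1.2, hz.2.2⟩
    obtain ⟨he1, he2⟩ := hMeet1 σ₁ hσ₁ σ₂ hσ₂ hneσ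
    obtain ⟨hf1, hf2⟩ := hMeet2 τ₁ hτ₁ τ₂ hτ₂ hneτ
    constructor
    · rw [hseq]
      exact PD.isExtreme_inter_cross he1 hf1
    · rw [hseq]
      exact PD.isExtreme_inter_cross he2 hf2
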